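/- Let $T$ be an invertible measure-preserving transformation of a probability space $(\Omega,\mathcal{B},\nu)$, let $\varphi \in L^\infty(\nu)$, and let $L \in \mathbb{R}$, $\kappa \in [0,1]$ satisfy $\nu\{x : \varphi(x) > L\} \le \kappa$. Then for any $\beta < L$, $\nu\{x : \varphi_j(x) \ge \beta j \text{ for all } j \ge 1\} \ge \frac{\int \varphi\, d\nu - \beta - \kappa\,\|\varphi - L\|_\infty}{L - \beta}$, where $\varphi_j(x) = \varphi(x) + \varphi(T x) + \cdots + \varphi(T^{j-1} x)$. -/

import Mathlib

open MeasureTheory Filter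

section MaxErg

variable {Ω : Type*} [MeasurableSpace Ω] {ν : Measure Ω} {T : Ω → Ω} {f : Ω → ℝ}

/-- `maxBirk T f n x = max (0, f₁ x, ..., fₙ x)` where `fₖ` is the `k`-th Birkhoff sum. -/
noncomputable def maxBirk (T : Ω → Ω) (f : Ω → ℝ) : ℕ → Ω → ℝ
  | 0 => fun _ => 0
  | n + 1 => fun x => max 0 (f x + maxBirk T f n (T x))

lemma maxBirk_nonneg (T : Ω → Ω) (f : Ω → ℝ) : ∀ n x, 0 ≤ maxBirk T f n x
  | 0, _ => le_refl 0
  | n + 1, x => le_max_left _ _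

lemma maxBirk_succ_le (T : Ω → Ω) (f : Ω → ℝ) : ∀ n x, maxBirk T f n x ≤ maxBirk T f (n + 1) x
  | 0, x => maxBirk_nonneg T f 1 x
  | n + 1, x => by
      simp only [maxBirk]
      exact max_le_max le_rfl (add_le_add le_rfl (maxBirk_succ_le T f n (T x)))

lemma maxBirk_mono (T : Ω → Ω) (f : Ω → ℝ) (x : Ω) : Monotone fun n => maxBirk T f n x :=
  monotone_nat_of_le_succ fun n => maxBirk_succ_le T f n x

lemma birkhoffSum_le_maxBirk (T : Ω → Ω) (f : Ω → ℝ) :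
    ∀ k n x, k ≤ n → birkhoffSum T f k x ≤ maxBirk T f n x
  | 0, n, x, _ => by
      rw [birkhoffSum_zero]; exact maxBirk_nonneg T f n x
  | k + 1, n, x, hk => by
      obtain ⟨m, rfl⟩ : ∃ m, n = m + 1 := ⟨n - 1, by omega⟩
      rw [birkhoffSum_succ']
      calc f x + birkhoffSum T f k (T x) ≤ f x + maxBirk T f m (T x) := by
            exact add_le_add le_rfl (birkhoffSum_le_maxBirk T f k m (T x) (by omega))
        _ ≤ maxBirk T f (m + 1) x := le_max_right _ _

lemma maxBirk_cases (T : Ω → Ω) (f : Ω → ℝ) :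
    ∀ n x, maxBirk T f n x = 0 ∨
      ∃ k, 1 ≤ k ∧ k ≤ n ∧ maxBirk T f n x = birkhoffSum T f k x
  | 0, x => Or.inl rfl
  | n + 1, x => by
      rcases max_choice 0 (f x + maxBirk T f n (T x)) with h | h
      · exact Or.inl h
      · rcases maxBirk_cases T f n (T x) with h0 | ⟨k, hk1, hkn, hk⟩
        · refine Or.inr ⟨1, le_rfl, by omega, ?_⟩
          rw [birkhoffSum_one]
          show max 0 (f x + maxBirk T f n (T x)) = f x
          rw [h, h0, add_zero]
        · refine Or.inr ⟨k + 1, by omega, by omega, ?_⟩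
          rw [birkhoffSum_succ']
          show max 0 (f x + maxBirk T f n (T x)) = f x + birkhoffSum T f k (T x)
          rw [h, hk]

lemma maxBirk_measurable (hT : Measurable T) (hf : Measurable f) :
    ∀ n, Measurable (maxBirk T f n)
  | 0 => measurable_const
  | n + 1 => measurable_const.max (hf.add ((maxBirk_measurable hT hf n).comp hT))

lemma maxBirk_integrable [IsFiniteMeasure ν] (hT : MeasurePreserving T ν ν) (hf : Measurable f)
    (hfi : Integrable f ν) : ∀ n, Integrable (maxBirk T f n) ν
  | 0 => integrable_const 0
  | n + 1 => by
      have h1 : Integrable (maxBirk T f n ∘ T) ν :=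
        memLp_one_iff_integrable.1
          ((memLp_one_iff_integrable.2 (maxBirk_integrable hT hf hfi n)).comp_measurePreserving hT)
      have h2 : Integrable (fun x => f x + maxBirk T f n (T x)) ν := hfi.add h1
      have := (integrable_const (0 : ℝ)).sup h2
      simpa [Pi.sup_def, maxBirk] using this

/-- The finite maximal ergodic theorem. -/
lemma maxErg_fin [IsFiniteMeasure ν] (hT : MeasurePreserving T ν ν) (hf : Measurable f)
    (hfi : Integrable f ν) (n : ℕ) :
    0 ≤ ∫ x in {x | 0 < maxBirk T f n x}, f x ∂ν := by
  set E := {x | 0 < maxBirk T f n x} with hE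
  have hEm : MeasurableSet E := measurableSet_lt measurable_const (maxBirk_measurable hT.measurable hf n)
  have hMint := maxBirk_integrable hT hf hfi n
  have hMTint : Integrable (fun x => maxBirk T f n (T x)) ν :=
    memLp_one_iff_integrable.1 ((memLp_one_iff_integrable.2 hMint).comp_measurePreserving hT)
  have hpt : ∀ x, maxBirk T f n x - maxBirk T f n (T x) ≤ E.indicator f x := by
    intro x
    by_cases hx : x ∈ E
    · rw [Set.indicator_of_mem hx]
      have hpos : 0 < maxBirk T f n x := hx
      obtain ⟨m, rfl⟩ : ∃ m, n = m + 1 := by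
        cases n with
        | zero => exact absurd hpos (by simp [maxBirk])
        | succ m => exact ⟨m, rfl⟩
      have h1 : maxBirk T f (m + 1) x = f x + maxBirk T f m (T x) := by
        rcases max_choice 0 (f x + maxBirk T f m (T x)) with h | h
        · exact absurd (show maxBirk T f (m+1) x = 0 from h) (ne_of_gt hpos)
        · exact h
      rw [h1]
      have := maxBirk_succ_le T f m (T x)
      linarith
    · rw [Set.indicator_of_notMem hx]
      have h0 : maxBirk T f n x = 0 :=
        le_antisymm (not_lt.mp hx) (maxBirk_nonneg T f n x)
      have := maxBirk_nonneg T f n (T x)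
      linarith
  have hint : ∫ x, (maxBirk T f n x - maxBirk T f n (T x)) ∂ν ≤ ∫ x in E, f x ∂ν := by
    rw [← integral_indicator hEm]
    exact integral_mono (hMint.sub hMTint) (hfi.indicator hEm) hpt
  have hcomp : ∫ x, maxBirk T f n (T x) ∂ν = ∫ x, maxBirk T f n x ∂ν := by
    have hsm : AEStronglyMeasurable (maxBirk T f n) (Measure.map T ν) := by
      rw [hT.map_eq]; exact (maxBirk_measurable hT.measurable hf n).aestronglyMeasurable
    rw [← integral_map hT.measurable.aemeasurable hsm, hT.map_eq]
  rw [integral_sub hMint hMTint, hcomp, sub_self] at hint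
  exact hint

/-- The maximal ergodic theorem. -/
lemma maxErg [IsFiniteMeasure ν] (hT : MeasurePreserving T ν ν) (hf : Measurable f) (hfi : Integrable f ν) :
    0 ≤ ∫ x in {x | ∃ k, 1 ≤ k ∧ 0 < birkhoffSum T f k x}, f x ∂ν := by
  have hset : {x | ∃ k, 1 ≤ k ∧ 0 < birkhoffSum T f k x} = ⋃ n, {x | 0 < maxBirk T f n x} := by
    ext x
    simp only [Set.mem_setOf_eq, Set.mem_iUnion]
    constructor
    · rintro ⟨k, hk1, hk⟩
      exact ⟨k, lt_of_lt_of_le hk (birkhoffSum_le_maxBirk T f k k x le_rfl)⟩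
    · rintro ⟨n, hn⟩
      rcases maxBirk_cases T f n x with h0 | ⟨k, hk1, hkn, hk⟩
      · exact absurd h0 (ne_of_gt hn)
      · exact ⟨k, hk1, hk ▸ hn⟩
  have hEm : ∀ n, MeasurableSet {x | 0 < maxBirk T f n x} := fun n =>
    measurableSet_lt measurable_const (maxBirk_measurable hT.measurable hf n)
  have hmono : Monotone fun n => {x | 0 < maxBirk T f n x} := by
    intro m n hmn x hx
    exact lt_of_lt_of_le hx (maxBirk_mono T f x hmn)
  rw [hset]
  have htend := tendsto_setIntegral_of_monotone hEm hmono hfi.integrableOn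
  exact ge_of_tendsto' htend fun n => maxErg_fin hT hf hfi n

end MaxErg

/-- Pliss-type lemma (Lemma 2.18 of Burguet–Crovisier–Sarig style). -/
theorem pliss_lemma {Ω : Type*} [MeasurableSpace Ω] (ν : Measure Ω)
    [IsProbabilityMeasure ν] (T : Ω → Ω) (hT : MeasurePreserving T ν ν)
    (hTbij : Function.Bijective T)
    (φ : Ω → ℝ) (hφ : MemLp φ ⊤ ν)
    (L κ : ℝ) (hκ0 : 0 ≤ κ) (hκ1 : κ ≤ 1)
    (hlevel : ν {x | L < φ x} ≤ ENNReal.ofReal κ)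
    (β : ℝ) (hβ : β < L) :
    (∫ x, φ x ∂ν - β - κ * essSup (fun x => |φ x - L|) ν) / (L - β)
      ≤ (ν {x | ∀ j : ℕ, 1 ≤ j → β * j ≤ birkhoffSum T φ j x}).toReal := by
  -- measurable representative
  set g : Ω → ℝ := hφ.1.mk φ with hgdef
  have hgsm : StronglyMeasurable g := hφ.1.stronglyMeasurable_mk
  have hgm : Measurable g := hgsm.measurable
  have hφg : φ =ᵐ[ν] g := hφ.1.ae_eq_mk
  have hgLp : MemLp g ⊤ ν := hφ.ae_eq hφg
  have hg_int : Integrable g ν := hgLp.integrable le_top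
  -- essSup bound
  set M : ℝ := essSup (fun x => |φ x - L|) ν with hMdef
  have hMg : M = essSup (fun x => |g x - L|) ν :=
    essSup_congr_ae (hφg.mono fun x h => by simp only [h])
  have hbddg : ∃ C : ℝ, ∀ᵐ x ∂ν, |g x - L| ≤ C := by
    have h1 : ∀ᵐ x ∂ν, (‖g x‖₊ : ENNReal) ≤ eLpNormEssSup g ν := ae_le_eLpNormEssSup
    have hfin : eLpNormEssSup g ν ≠ ⊤ := by
      have := hgLp.2
      rwa [eLpNorm_exponent_top, lt_top_iff_ne_top] at this
    refine ⟨(eLpNormEssSup g ν).toReal + |L|, h1.mono fun x hx => ?_⟩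
    have h2 : ‖g x‖ ≤ (eLpNormEssSup g ν).toReal := by
      have := ENNReal.toReal_mono hfin hx
      simpa using this
    calc |g x - L| ≤ |g x| + |L| := abs_sub _ _
      _ ≤ (eLpNormEssSup g ν).toReal + |L| := by
          have : |g x| = ‖g x‖ := rfl
          linarith
  obtain ⟨C, hC⟩ := hbddg
  have haeM : ∀ᵐ x ∂ν, |g x - L| ≤ M := by
    rw [hMg]
    exact ae_le_essSup ⟨C, hC⟩
  have hM0 : 0 ≤ M := by
    obtain ⟨x, hx⟩ := haeM.exists
    exact le_trans (abs_nonneg _) hx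
  -- the auxiliary function ψ = β - g
  set ψ : Ω → ℝ := fun x => β - g x with hψdef
  have hψm : Measurable ψ := measurable_const.sub hgm
  have hψi : Integrable ψ ν := (integrable_const β).sub hg_int
  have hbs : ∀ k x, birkhoffSum T ψ k x = k * β - birkhoffSum T g k x := by
    intro k x
    simp only [birkhoffSum, hψdef, Finset.sum_sub_distrib, Finset.sum_const,
      Finset.card_range, nsmul_eq_mul]
  set E : Set Ω := {x | ∃ k, 1 ≤ k ∧ 0 < birkhoffSum T ψ k x} with hEdef
  have hbsm : ∀ k, Measurable (fun x => birkhoffSum T ψ k x) := by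
    intro k
    exact Finset.measurable_sum _ fun i _ => hψm.comp (hT.measurable.iterate i)
  have hEm : MeasurableSet E := by
    have : E = ⋃ k : ℕ, {x | 1 ≤ k} ∩ {x | 0 < birkhoffSum T ψ k x} := by
      ext x; simp [hEdef, Set.mem_iUnion, Set.mem_inter_iff, Set.mem_setOf_eq]
    rw [this]
    exact MeasurableSet.iUnion fun k =>
      (MeasurableSet.const _).inter (measurableSet_lt measurable_const (hbsm k))
  -- complement of E is the good set (for g)
  have hcompl : Eᶜ = {x | ∀ j : ℕ, 1 ≤ j → β * j ≤ birkhoffSum T g j x} := by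
    ext x
    simp only [Set.mem_compl_iff, hEdef, Set.mem_setOf_eq, not_exists, not_and, not_lt]
    constructor
    · intro h j hj
      have := h j hj
      rw [hbs] at this
      linarith [this, mul_comm β (j : ℝ)]
    · intro h k hk
      rw [hbs]
      have := h k hk
      linarith [mul_comm β (k : ℝ)]
  -- maximal ergodic theorem
  have hME : 0 ≤ ∫ x in E, ψ x ∂ν := maxErg hT hψm hψi
  have hEconst : ∫ x in E, (β : ℝ) ∂ν = (ν E).toReal * β := by
    rw [setIntegral_const]; ring_nf; rfl
  have hEψ : ∫ x in E, ψ x ∂ν = (ν E).toReal * β - ∫ x in E, g x ∂ν := by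
    rw [hψdef]
    rw [integral_sub (integrableOn_const (C := β) (measure_ne_top ν E)) hg_int.integrableOn]
    rw [hEconst]
  have hEg : ∫ x in E, g x ∂ν ≤ β * (ν E).toReal := by
    rw [hEψ] at hME; linarith
  -- split of total integral
  have htot : ∫ x in E, g x ∂ν + ∫ x in Eᶜ, g x ∂ν = ∫ x, g x ∂ν :=
    integral_add_compl hEm hg_int
  -- bound on Eᶜ
  set S : Set Ω := {x | L < g x} with hSdef
  have hSm : MeasurableSet S := measurableSet_lt measurable_const hgm
  have hνS : ν S ≤ ENNReal.ofReal κ := by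
    have hsub : S ⊆ {x | L < φ x} ∪ {x | φ x ≠ g x} := by
      intro x hx
      by_cases h : φ x = g x
      · exact Or.inl (by simpa [Set.mem_setOf_eq, h, hSdef] using hx)
      · exact Or.inr h
    have hnull : ν {x | φ x ≠ g x} = 0 := hφg
    calc ν S ≤ ν ({x | L < φ x} ∪ {x | φ x ≠ g x}) := measure_mono hsub
      _ ≤ ν {x | L < φ x} + ν {x | φ x ≠ g x} := measure_union_le _ _
      _ = ν {x | L < φ x} := by rw [hnull, add_zero]
      _ ≤ ENNReal.ofReal κ := hlevel
  have hgL_int : Integrable (fun x => g x - L) ν := hg_int.sub (integrable_const L)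
  have hsplit : ∫ x in Eᶜ, (g x - L) ∂ν
      = (∫ x in S, (g x - L) ∂(ν.restrict Eᶜ)) + ∫ x in Sᶜ, (g x - L) ∂(ν.restrict Eᶜ) :=
    (integral_add_compl hSm (hgL_int.restrict)).symm
  have hterm1 : ∫ x in S, (g x - L) ∂(ν.restrict Eᶜ) ≤ κ * M := by
    rw [Measure.restrict_restrict hSm]
    have hfin : ν (S ∩ Eᶜ) < ⊤ := measure_lt_top _ _
    have hae : ∀ᵐ x ∂ν.restrict (S ∩ Eᶜ), ‖g x - L‖ ≤ M :=
      ae_restrict_of_ae (haeM.mono fun x hx => by simpa [Real.norm_eq_abs] using hx)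
    have hb := norm_setIntegral_le_of_norm_le_const_ae hfin hae
    have h2 : (ν (S ∩ Eᶜ)).toReal ≤ κ := by
      refine ENNReal.toReal_le_of_le_ofReal hκ0 ?_
      exact le_trans (measure_mono Set.inter_subset_left) hνS
    calc ∫ x in S ∩ Eᶜ, (g x - L) ∂ν ≤ ‖∫ x in S ∩ Eᶜ, (g x - L) ∂ν‖ := le_abs_self _
      _ ≤ M * (ν (S ∩ Eᶜ)).toReal := hb
      _ ≤ M * κ := mul_le_mul_of_nonneg_left h2 hM0
      _ = κ * M := mul_comm _ _
  have hterm2 : ∫ x in Sᶜ, (g x - L) ∂(ν.restrict Eᶜ) ≤ 0 := by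
    rw [Measure.restrict_restrict hSm.compl]
    have hev : ∀ᵐ x ∂ν.restrict (Sᶜ ∩ Eᶜ), g x ≤ L :=
      (ae_restrict_iff' (hSm.compl.inter hEm.compl)).2 (ae_of_all _ fun x hx => not_lt.mp hx.1)
    refine integral_nonpos_of_ae ?_
    filter_upwards [hev] with x hx
    simp only [Pi.zero_apply]
    linarith
  have hEcgL : ∫ x in Eᶜ, (g x - L) ∂ν = ∫ x in Eᶜ, g x ∂ν - L * (ν Eᶜ).toReal := by
    rw [integral_sub hg_int.integrableOn (integrableOn_const (C := L) (measure_ne_top ν Eᶜ))]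
    rw [setIntegral_const, smul_eq_mul, mul_comm]; rfl
  have hEc : ∫ x in Eᶜ, g x ∂ν ≤ κ * M + L * (ν Eᶜ).toReal := by
    have h := hsplit
    rw [hEcgL] at h
    linarith [hterm1, hterm2]
  -- combine
  have hsum1 : (ν E).toReal + (ν Eᶜ).toReal = 1 := by
    rw [← ENNReal.toReal_add (measure_ne_top ν E) (measure_ne_top ν Eᶜ),
      measure_add_measure_compl hEm, measure_univ, ENNReal.toReal_one]
  have hIeq : ∫ x, φ x ∂ν = ∫ x, g x ∂ν := integral_congr_ae hφg
  have hkey : ∫ x, g x ∂ν - β - κ * M ≤ (L - β) * (ν Eᶜ).toReal := by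
    have h1 : ∫ x, g x ∂ν ≤ β * (ν E).toReal + (κ * M + L * (ν Eᶜ).toReal) := by
      rw [← htot]; exact add_le_add hEg hEc
    have ha : (ν E).toReal = 1 - (ν Eᶜ).toReal := by linarith
    rw [ha] at h1
    nlinarith [h1]
  have hdiv : (∫ x, φ x ∂ν - β - κ * M) / (L - β) ≤ (ν Eᶜ).toReal := by
    rw [div_le_iff₀ (by linarith : (0:ℝ) < L - β), hIeq]
    linarith [hkey]
  -- transfer to φ-set
  set N : Set Ω := {x | ∃ i : ℕ, φ (T^[i] x) ≠ g (T^[i] x)} with hNdef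
  have hNnull : ν N = 0 := by
    have : N = ⋃ i : ℕ, T^[i] ⁻¹' {x | φ x ≠ g x} := by
      ext x; simp [hNdef, Set.mem_iUnion, Set.mem_preimage, Set.mem_setOf_eq]
    rw [this]
    exact measure_iUnion_null fun i =>
      (hT.iterate i).quasiMeasurePreserving.preimage_null hφg
  have hsubφ : Eᶜ \ N ⊆ {x | ∀ j : ℕ, 1 ≤ j → β * j ≤ birkhoffSum T φ j x} := by
    intro x hx
    rw [hcompl] at hx
    intro j hj
    have heq : birkhoffSum T φ j x = birkhoffSum T g j x := by
      refine Finset.sum_congr rfl fun i _ => ?_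
      by_contra hne
      exact hx.2 ⟨i, hne⟩
    rw [heq]
    exact hx.1 j hj
  have hfinal : (ν Eᶜ).toReal ≤ (ν {x | ∀ j : ℕ, 1 ≤ j → β * j ≤ birkhoffSum T φ j x}).toReal := by
    refine ENNReal.toReal_mono (measure_ne_top ν _) ?_
    calc ν Eᶜ = ν (Eᶜ \ N) := (measure_diff_null hNnull).symm
      _ ≤ ν _ := measure_mono hsubφ
  exact le_trans hdiv hfinal
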